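/- Let r ≥ 2, let a_1,...,a_r ∈ ℂ be pairwise distinct, and let m'_1,...,m'_r ∈ ℂ. Define G(m') = Σ_{l=1}^r m'_l ∏_{p≠l} (1 - m'_p/(a_l - a_p)) - Σ_{l=1}^r m'_l. Then G is a polynomial in (m'_1,...,m'_r) that vanishes identically; in particular G vanishes on the diagonal m'_1 = ⋯ = m'_r = t for all t ∈ ℂ. -/

import Mathlib

open Finset

open Polynomial in
lemma key {r : ℕ} (hr : 1 ≤ r) (a : Fin r → ℂ) (ha : Function.Injective a)
    (m : Fin r → ℂ) :
    ∑ l : Fin r, m l * ∏ p ∈ Finset.univ.erase l, (1 - m p / (a l - a p))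
      = ∑ l : Fin r, m l := by
  obtain ⟨b, hb⟩ : ∃ b : Fin r → ℂ, ∀ p, b p = a p + m p := ⟨_, fun _ => rfl⟩
  set P : Polynomial ℂ := ∏ p : Fin r, (X - C (b p)) with hP
  set Q : Polynomial ℂ := ∏ p : Fin r, (X - C (a p)) with hQ
  have hPm : P.Monic := monic_prod_of_monic _ _ fun p _ => monic_X_sub_C _
  have hQm : Q.Monic := monic_prod_of_monic _ _ fun p _ => monic_X_sub_C _
  have hPd : P.natDegree = r := by
    simpa [hP] using natDegree_prod_of_monic univ (fun p : Fin r => X - C (b p))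
      (fun p _ => monic_X_sub_C _)
  have hQd : Q.natDegree = r := by
    simpa [hQ] using natDegree_prod_of_monic univ (fun p : Fin r => X - C (a p))
      (fun p _ => monic_X_sub_C _)
  have hdeg : (P - Q).degree < (univ : Finset (Fin r)).card := by
    rcases eq_or_ne P Q with h | h
    · simp only [h, sub_self, degree_zero, Finset.card_univ, Fintype.card_fin]
      exact_mod_cast WithBot.bot_lt_coe r
    · have h1 : P.degree = Q.degree := by
        rw [degree_eq_natDegree hPm.ne_zero, degree_eq_natDegree hQm.ne_zero, hPd, hQd]
      have := degree_sub_lt h1 hPm.ne_zero (by rw [hPm.leadingCoeff, hQm.leadingCoeff])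
      calc (P - Q).degree < P.degree := this
        _ = (r : ℕ) := by rw [degree_eq_natDegree hPm.ne_zero, hPd]
        _ ≤ _ := by simp
  have hinj : Set.InjOn a (univ : Finset (Fin r)) := ha.injOn
  have hinterp := Lagrange.eq_interpolate hinj hdeg
  -- compare coefficient r-1
  have hcoeff := congrArg (fun f => Polynomial.coeff f (r - 1)) hinterp
  simp only [Lagrange.interpolate_apply] at hcoeff
  -- LHS coefficient
  have hcP : P.coeff (r - 1) = -∑ p : Fin r, b p := by
    have := prod_X_sub_C_nextCoeff (s := (univ : Finset (Fin r))) b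
    rwa [nextCoeff, if_neg (by rw [hPd]; omega), hPd] at this
  have hcQ : Q.coeff (r - 1) = -∑ p : Fin r, a p := by
    have := prod_X_sub_C_nextCoeff (s := (univ : Finset (Fin r))) a
    rwa [nextCoeff, if_neg (by rw [hQd]; omega), hQd] at this
  -- RHS coefficient: coefficient of basis polynomials
  have hbasis : ∀ l : Fin r,
      (Lagrange.basis univ a l).coeff (r - 1) = ∏ p ∈ univ.erase l, (a l - a p)⁻¹ := by
    intro l
    rw [Lagrange.basis]
    have : ∀ j ∈ univ.erase l, Lagrange.basisDivisor (a l) (a j)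
        = C ((a l - a j)⁻¹) * (X - C (a j)) := fun j _ => rfl
    rw [Finset.prod_congr rfl this, Finset.prod_mul_distrib, ← map_prod]
    rw [coeff_C_mul]
    have hm : (∏ j ∈ univ.erase l, (X - C (a j))).Monic :=
      monic_prod_of_monic _ _ fun p _ => monic_X_sub_C _
    have hd : (∏ j ∈ univ.erase l, (X - C (a j))).natDegree = r - 1 := by
      have := natDegree_prod_of_monic (univ.erase l) (fun p : Fin r => X - C (a p))
        (fun p _ => monic_X_sub_C _)
      simpa [Finset.card_erase_of_mem] using this
    rw [← hd, hm.coeff_natDegree, mul_one]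
  -- eval of P - Q at a l
  have heval : ∀ l : Fin r, (P - Q).eval (a l)
      = -(m l) * ∏ p ∈ univ.erase l, (a l - b p) := by
    intro l
    have hQ0 : Q.eval (a l) = 0 := by
      rw [hQ, eval_prod]
      exact Finset.prod_eq_zero (mem_univ l) (by simp)
    have hP' : P.eval (a l) = (a l - b l) * ∏ p ∈ univ.erase l, (a l - b p) := by
      rw [hP, eval_prod]
      simp only [eval_sub, eval_X, eval_C]
      exact (Finset.mul_prod_erase univ _ (mem_univ l)).symm
    have hbl : a l - b l = -(m l) := by rw [hb]; ring
    rw [eval_sub, hQ0, hP', sub_zero, hbl]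
  rw [coeff_sub, hcP, hcQ, finset_sum_coeff] at hcoeff
  simp only [coeff_C_mul, hbasis, heval] at hcoeff
  have hL : (-∑ p : Fin r, b p) - -∑ p : Fin r, a p = -∑ p : Fin r, m p := by
    simp only [hb]
    rw [Finset.sum_add_distrib]
    ring
  rw [hL] at hcoeff
  have hR : ∑ l : Fin r, m l * ∏ p ∈ univ.erase l, (1 - m p / (a l - a p))
      = -∑ l : Fin r, (-(m l) * ∏ p ∈ univ.erase l, (a l - b p))
          * ∏ p ∈ univ.erase l, (a l - a p)⁻¹ := by
    rw [← Finset.sum_neg_distrib]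
    refine Finset.sum_congr rfl fun l _ => ?_
    have hprod : ∏ p ∈ univ.erase l, (1 - m p / (a l - a p))
        = (∏ p ∈ univ.erase l, (a l - b p)) * ∏ p ∈ univ.erase l, (a l - a p)⁻¹ := by
      rw [← Finset.prod_mul_distrib]
      refine Finset.prod_congr rfl fun p hp => ?_
      have hne : a l - a p ≠ 0 :=
        sub_ne_zero_of_ne fun h => (Finset.mem_erase.mp hp).1 (ha h).symm
      rw [hb]
      field_simp
      ring
    rw [hprod, neg_mul, neg_mul, neg_neg, mul_assoc]
  linear_combination hR + hcoeff


/-- For `r ≥ 2` and pairwise distinct `a₁,...,a_r ∈ ℂ`, the polynomial function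
`G(m') = Σ_l m'_l ∏_{p≠l}(1 - m'_p/(a_l - a_p)) - Σ_l m'_l` vanishes identically;
in particular it vanishes on the diagonal `m'₁ = ⋯ = m'_r = t`. -/
theorem one_instanton_difference_vanishes {r : ℕ} (hr : 2 ≤ r)
    (a : Fin r → ℂ) (ha : Function.Injective a) :
    (∀ m' : Fin r → ℂ,
        (∑ l : Fin r, m' l * ∏ p ∈ Finset.univ.erase l, (1 - m' p / (a l - a p)))
            - ∑ l : Fin r, m' l = 0)
      ∧ ∀ t : ℂ,
        (∑ l : Fin r, t * ∏ p ∈ Finset.univ.erase l, (1 - t / (a l - a p)))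
            - ∑ _l : Fin r, t = 0 := by
  have h1 : ∀ m' : Fin r → ℂ,
      (∑ l : Fin r, m' l * ∏ p ∈ Finset.univ.erase l, (1 - m' p / (a l - a p)))
          - ∑ l : Fin r, m' l = 0 := by
    intro m'
    rw [key (by omega) a ha m', sub_self]
  exact ⟨h1, fun t => h1 (fun _ => t)⟩
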